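/- For every ε > 0 and every finite simple graph G on a nonempty vertex set, there exists a finite simple triangle-free graph Ĝ on a nonempty vertex set such that rel-IS(G) ≤ rel-IS(Ĝ) ≤ (1 + ε)·rel-IS(G), where rel-IS denotes the maximum independent set size divided by the number of vertices. -/

import Mathlib

/-- `I` is an independent set of `G`: no two of its vertices are adjacent. -/
def IsIndepSet {V : Type*} (G : SimpleGraph V) (I : Finset V) : Prop :=
  ∀ u ∈ I, ∀ v ∈ I, ¬ G.Adj u v

/-- `IS(G)`: the maximum size of an independent set of `G`. -/
noncomputable def indepNum (V : Type*) [Fintype V] (G : SimpleGraph V) : ℕ :=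
  sSup {k | ∃ I : Finset V, IsIndepSet G I ∧ I.card = k}

/-- `rel-IS(G) = IS(G)/|V(G)|`: the maximum independent set size divided by the number of
vertices. -/
noncomputable def relIS (V : Type*) [Fintype V] (G : SimpleGraph V) : ℝ :=
  (indepNum V G : ℝ) / (Fintype.card V : ℝ)

set_option linter.unusedSectionVars false
set_option linter.unusedVariables false

open Finset

section API
variable {V : Type*} [Fintype V] (G : SimpleGraph V)

lemma indepSet_bddAbove : BddAbove {k | ∃ I : Finset V, IsIndepSet G I ∧ I.card = k} := by
  refine ⟨Fintype.card V, fun k hk => ?_⟩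
  obtain ⟨I, -, rfl⟩ := hk
  exact Finset.card_le_univ I

lemma indepSet_nonempty : {k | ∃ I : Finset V, IsIndepSet G I ∧ I.card = k}.Nonempty :=
  ⟨0, ∅, fun u hu => by simp at hu, rfl⟩

lemma le_indepNum {I : Finset V} (hI : IsIndepSet G I) : I.card ≤ indepNum V G :=
  le_csSup (indepSet_bddAbove G) ⟨I, hI, rfl⟩

lemma indepNum_le {b : ℕ} (h : ∀ I : Finset V, IsIndepSet G I → I.card ≤ b) :
    indepNum V G ≤ b :=
  csSup_le (indepSet_nonempty G) (fun k hk => by obtain ⟨I, hI, rfl⟩ := hk; exact h I hI)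

lemma exists_indep_card : ∃ I : Finset V, IsIndepSet G I ∧ I.card = indepNum V G :=
  Nat.sSup_mem (indepSet_nonempty G) (indepSet_bddAbove G)

lemma IsIndepSet.subset {G : SimpleGraph V} {I J : Finset V} (hJ : J ⊆ I)
    (hI : IsIndepSet G I) : IsIndepSet G J :=
  fun u hu v hv => hI u (hJ hu) v (hJ hv)

end API

-- numeric helpers
lemma nat_le_two_pow (a : ℕ) : a ≤ 2 ^ a := (Nat.lt_two_pow_self (n := a)).le

lemma lin_le_two_pow {L : ℕ} (h : 7 ≤ L) : 16 * L ≤ 2 ^ L := by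
  induction L with
  | zero => omega
  | succ n ih =>
    rcases Nat.lt_or_ge n 7 with h7 | h7
    · interval_cases n <;> first | omega | norm_num
    · have := ih h7
      have h16 : 16 ≤ 2 ^ n := le_trans (by norm_num) (Nat.pow_le_pow_right (by norm_num) h7)
      calc 16 * (n+1) = 16 * n + 16 := by ring
        _ ≤ 2 ^ n + 2 ^ n := by omega
        _ = 2 ^ (n+1) := by ring

lemma sq_le_two_pow {M : ℕ} (h : 8 ≤ M) : (M + 5) ^ 2 ≤ 2 ^ M := by
  induction M with
  | zero => omega
  | succ n ih =>
    rcases Nat.lt_or_ge n 8 with h8 | h8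
    · interval_cases n <;> first | omega | norm_num
    · have := ih h8
      have h2 : 2 * n + 11 ≤ (n + 5) ^ 2 := by nlinarith
      calc (n + 1 + 5) ^ 2 = (n + 5) ^ 2 + (2 * n + 11) := by ring
        _ ≤ 2 ^ n + 2 ^ n := by omega
        _ = 2 ^ (n + 1) := by ring

lemma binom_helper (a k : ℕ) (hk : 1 ≤ k) : a ^ k + k * a ^ (k - 1) ≤ (a + 1) ^ k := by
  induction k with
  | zero => omega
  | succ n ih =>
    rcases Nat.eq_or_lt_of_le hk with h | h
    · simp [← h]
    · have hn : 1 ≤ n := by omega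
      have := ih hn
      have key : (a ^ n + n * a ^ (n - 1)) * (a + 1) ≤ (a + 1) ^ (n + 1) := by
        rw [pow_succ]
        exact Nat.mul_le_mul_right _ this
      refine le_trans ?_ key
      have hpow : a ^ (n - 1) * a = a ^ n := by
        rw [← pow_succ]; congr 1; omega
      have expand : (a ^ n + n * a ^ (n - 1)) * (a + 1)
          = a ^ n * a + n * (a ^ (n - 1) * a) + a ^ n + n * a ^ (n - 1) := by ring
      rw [hpow] at expand
      rw [expand, pow_succ]
      simp only [Nat.add_sub_cancel]
      nlinarith [Nat.zero_le (n * a ^ (n - 1))]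

lemma two_mul_pred_pow_le (q : ℕ) (hq : 2 ≤ q) : 2 * (q - 1) ^ q ≤ q ^ q := by
  obtain ⟨a, rfl⟩ : ∃ a, q = a + 1 := ⟨q - 1, by omega⟩
  have h := binom_helper a (a + 1) (by omega)
  simp only [Nat.add_sub_cancel] at h
  have ha : 1 ≤ a := by omega
  calc 2 * (a + 1 - 1) ^ (a + 1) = a ^ (a + 1) + a * a ^ a := by
        simp [pow_succ]; ring
    _ ≤ a ^ (a + 1) + (a + 1) * a ^ a := by
        have : a * a ^ a ≤ (a+1) * a ^ a := Nat.mul_le_mul_right _ (by omega)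
        omega
    _ ≤ (a + 1) ^ (a + 1) := h

/-- Counting functions with constrained values on a finite set of coordinates. -/
lemma count_constrained {α β : Type*} [Fintype α] [DecidableEq α] [Fintype β]
    [DecidableEq β] (K : Finset α) (A : α → Finset β) :
    ((Finset.univ : Finset (α → β)).filter (fun f => ∀ e ∈ K, f e ∈ A e)).card ≤
      (∏ e ∈ K, (A e).card) * (Fintype.card β) ^ (Fintype.card α - K.card) := by
  classical
  set B : α → Finset β := fun a => if a ∈ K then A a else Finset.univ with hB
  have hsub : ((Finset.univ : Finset (α → β)).filter (fun f => ∀ e ∈ K, f e ∈ A e)) ⊆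
      Fintype.piFinset B := by
    intro f hf
    rw [Finset.mem_filter] at hf
    rw [Fintype.mem_piFinset]
    intro a
    by_cases ha : a ∈ K
    · simp [hB, ha, hf.2 a ha]
    · simp [hB, ha]
  refine (Finset.card_le_card hsub).trans ?_
  rw [Fintype.card_piFinset]
  rw [← Finset.prod_mul_prod_compl K (fun a => (B a).card)]
  apply Nat.mul_le_mul
  · apply Nat.le_of_eq
    apply Finset.prod_congr rfl
    intro a ha; simp [hB, ha]
  · have : ∀ a ∈ Kᶜ, (B a).card = Fintype.card β := by
      intro a ha
      rw [Finset.mem_compl] at ha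
      simp [hB, ha, Finset.card_univ]
    rw [Finset.prod_congr rfl this, Finset.prod_const, Finset.card_compl]

lemma sort3 {α : Type*} [LinearOrder α] {r : α → α → Prop} (hs : ∀ x y, r x y → r y x)
    {x y z : α} (nxy : x ≠ y) (nyz : y ≠ z) (nxz : x ≠ z)
    (hxy : r x y) (hyz : r y z) (hxz : r x z) :
    ∃ a b c, a < b ∧ b < c ∧ r a b ∧ r b c ∧ r a c ∧ (a = x ∨ a = y ∨ a = z) := by
  rcases lt_trichotomy x y with h1 | h1 | h1
  · rcases lt_trichotomy y z with h2 | h2 | h2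
    · exact ⟨x, y, z, h1, h2, hxy, hyz, hxz, Or.inl rfl⟩
    · exact absurd h2 nyz
    · rcases lt_trichotomy x z with h3 | h3 | h3
      · exact ⟨x, z, y, h3, h2, hxz, hs _ _ hyz, hxy, Or.inl rfl⟩
      · exact absurd h3 nxz
      · exact ⟨z, x, y, h3, h1, hs _ _ hxz, hxy, hs _ _ hyz, Or.inr (Or.inr rfl)⟩
  · exact absurd h1 nxy
  · rcases lt_trichotomy x z with h2 | h2 | h2
    · exact ⟨y, x, z, h1, h2, hs _ _ hxy, hxz, hyz, Or.inr (Or.inl rfl)⟩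
    · exact absurd h2 nxz
    · rcases lt_trichotomy y z with h3 | h3 | h3
      · exact ⟨y, z, x, h3, h2, hyz, hs _ _ hxz, hs _ _ hxy, Or.inr (Or.inl rfl)⟩
      · exact absurd h3 nyz
      · exact ⟨z, y, x, h3, h1, hs _ _ hyz, hs _ _ hxy, hs _ _ hxz, Or.inr (Or.inr rfl)⟩

namespace TFree

variable (n q : ℕ)

variable [NeZero q]

/-- The random graph determined by an edge-labelling `f`. -/
def Gr (f : Sym2 (Fin n) → Fin q) : SimpleGraph (Fin n) where
  Adj x y := x ≠ y ∧ f s(x, y) = 0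
  symm := by
    constructor
    intro x y h
    refine ⟨h.1.symm, ?_⟩
    rw [Sym2.eq_swap]
    exact h.2
  loopless := ⟨fun x h => h.1 rfl⟩

lemma Gr_adj (f : Sym2 (Fin n) → Fin q) (x y : Fin n) :
    (Gr n q f).Adj x y ↔ x ≠ y ∧ f s(x, y) = 0 := Iff.rfl

/-- The set of (ordered) triangles of `Gr f`. -/
noncomputable def Tri (f : Sym2 (Fin n) → Fin q) : Finset (Fin n × Fin n × Fin n) := by
  classical
  exact univ.filter (fun t => t.1 < t.2.1 ∧ t.2.1 < t.2.2 ∧ (Gr n q f).Adj t.1 t.2.1 ∧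
    (Gr n q f).Adj t.2.1 t.2.2 ∧ (Gr n q f).Adj t.1 t.2.2)

/-- Expected number of triangles. -/
lemma sum_tri_le : ∑ f : Sym2 (Fin n) → Fin q, (Tri n q f).card ≤
    n ^ 3 * q ^ (Fintype.card (Sym2 (Fin n)) - 3) := by
  classical
  set E := Fintype.card (Sym2 (Fin n)) with hEdef
  have count_one : ∀ t : Fin n × Fin n × Fin n,
      ((univ : Finset (Sym2 (Fin n) → Fin q)).filter (fun f => t.1 < t.2.1 ∧ t.2.1 < t.2.2 ∧
        (Gr n q f).Adj t.1 t.2.1 ∧ (Gr n q f).Adj t.2.1 t.2.2 ∧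
        (Gr n q f).Adj t.1 t.2.2)).card ≤ q ^ (E - 3) := by
    rintro ⟨a, b, c⟩
    by_cases hord : a < b ∧ b < c
    · have nab : a ≠ b := ne_of_lt hord.1
      have nbc : b ≠ c := ne_of_lt hord.2
      have nac : a ≠ c := ne_of_lt (hord.1.trans hord.2)
      set K : Finset (Sym2 (Fin n)) := {s(a,b), s(b,c), s(a,c)} with hKdef
      have hKcard : K.card = 3 := by
        rw [hKdef, card_insert_of_notMem, card_insert_of_notMem, card_singleton]
        · simp only [mem_singleton, Sym2.eq_iff]
          tauto
        · simp only [mem_insert, mem_singleton, Sym2.eq_iff]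
          tauto
      have hsub : ((univ : Finset (Sym2 (Fin n) → Fin q)).filter (fun f => a < b ∧ b < c ∧
          (Gr n q f).Adj a b ∧ (Gr n q f).Adj b c ∧ (Gr n q f).Adj a c)) ⊆
          ((univ : Finset (Sym2 (Fin n) → Fin q)).filter
            (fun f => ∀ e ∈ K, f e ∈ ({0} : Finset (Fin q)))) := by
        intro f hf
        rw [mem_filter] at hf ⊢
        refine ⟨mem_univ _, ?_⟩
        intro e he
        rw [hKdef] at he
        simp only [mem_insert, mem_singleton] at he
        rw [mem_singleton]
        simp only [Gr_adj] at hf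
        rcases he with rfl | rfl | rfl
        · exact hf.2.2.2.1.2
        · exact hf.2.2.2.2.1.2
        · exact hf.2.2.2.2.2.2
      calc ((univ : Finset (Sym2 (Fin n) → Fin q)).filter (fun f => a < b ∧ b < c ∧
          (Gr n q f).Adj a b ∧ (Gr n q f).Adj b c ∧ (Gr n q f).Adj a c)).card
          ≤ ((univ : Finset (Sym2 (Fin n) → Fin q)).filter
            (fun f => ∀ e ∈ K, f e ∈ ({0} : Finset (Fin q)))).card := card_le_card hsub
        _ ≤ (∏ _e ∈ K, ({0} : Finset (Fin q)).card) *
            (Fintype.card (Fin q)) ^ (Fintype.card (Sym2 (Fin n)) - K.card) :=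
            count_constrained K (fun _ => {0})
        _ = q ^ (E - 3) := by
            rw [prod_const, card_singleton, one_pow, one_mul, Fintype.card_fin, hKcard]
    · have hempty : ((univ : Finset (Sym2 (Fin n) → Fin q)).filter (fun f => a < b ∧ b < c ∧
          (Gr n q f).Adj a b ∧ (Gr n q f).Adj b c ∧ (Gr n q f).Adj a c)) = ∅ := by
        rw [filter_eq_empty_iff]
        intro f _ hcon
        exact hord ⟨hcon.1, hcon.2.1⟩
      rw [hempty]
      simp
  have hswap : ∑ f : Sym2 (Fin n) → Fin q, (Tri n q f).card =
      ∑ t : Fin n × Fin n × Fin n, ((univ : Finset (Sym2 (Fin n) → Fin q)).filter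
        (fun f => t.1 < t.2.1 ∧ t.2.1 < t.2.2 ∧ (Gr n q f).Adj t.1 t.2.1 ∧
          (Gr n q f).Adj t.2.1 t.2.2 ∧ (Gr n q f).Adj t.1 t.2.2)).card := by
    simp only [Tri, card_filter]
    rw [Finset.sum_comm]
  rw [hswap]
  calc ∑ t : Fin n × Fin n × Fin n, ((univ : Finset (Sym2 (Fin n) → Fin q)).filter
        (fun f => t.1 < t.2.1 ∧ t.2.1 < t.2.2 ∧ (Gr n q f).Adj t.1 t.2.1 ∧
          (Gr n q f).Adj t.2.1 t.2.2 ∧ (Gr n q f).Adj t.1 t.2.2)).card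
      ≤ ∑ _t : Fin n × Fin n × Fin n, q ^ (E - 3) :=
        Finset.sum_le_sum (fun t _ => count_one t)
    _ = n ^ 3 * q ^ (E - 3) := by
        rw [Finset.sum_const, Finset.card_univ]
        simp only [Fintype.card_prod, Fintype.card_fin, smul_eq_mul]
        ring

end TFree

namespace TFree

variable (n q s : ℕ) [NeZero q]

open scoped Classical in
/-- The set of labellings whose graph has an independent set of size `s`. -/
noncomputable def Bad : Finset (Sym2 (Fin n) → Fin q) :=
  univ.filter (fun f => ∃ I ∈ (univ : Finset (Fin n)).powersetCard s, IsIndepSet (Gr n q f) I)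

lemma bad_le (c2 : ℕ) (hq2 : 2 ≤ q) (hc2 : c2 ≤ Nat.choose s 2) :
    (TFree.Bad n q s).card ≤
      Nat.choose n s * ((q - 1) ^ c2 * q ^ (Fintype.card (Sym2 (Fin n)) - c2)) := by
  classical
  set E := Fintype.card (Sym2 (Fin n)) with hEdef
  have count_I : ∀ I ∈ (univ : Finset (Fin n)).powersetCard s,
      ((univ : Finset (Sym2 (Fin n) → Fin q)).filter (fun f => IsIndepSet (Gr n q f) I)).card ≤
        (q - 1) ^ c2 * q ^ (E - c2) := by
    intro I hI
    rw [mem_powersetCard] at hI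
    obtain ⟨-, hIcard⟩ := hI
    set K : Finset (Sym2 (Fin n)) := I.offDiag.image Sym2.mk.uncurry with hKdef
    have hKcard : K.card = Nat.choose s 2 := by
      rw [hKdef, Sym2.card_image_offDiag, hIcard]
    have hKE : K.card ≤ E := by
      rw [hEdef, ← Finset.card_univ]
      exact card_le_card (subset_univ K)
    have hc2K : c2 ≤ K.card := by rw [hKcard]; exact hc2
    have hsub : ((univ : Finset (Sym2 (Fin n) → Fin q)).filter
        (fun f => IsIndepSet (Gr n q f) I)) ⊆
        ((univ : Finset (Sym2 (Fin n) → Fin q)).filter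
          (fun f => ∀ e ∈ K, f e ∈ ({0}ᶜ : Finset (Fin q)))) := by
      intro f hf
      rw [mem_filter] at hf ⊢
      refine ⟨mem_univ _, ?_⟩
      intro e he
      rw [hKdef, mem_image] at he
      obtain ⟨⟨u, v⟩, hp, rfl⟩ := he
      rw [mem_offDiag] at hp
      rw [mem_compl, mem_singleton]
      intro h0
      exact hf.2 u hp.1 v hp.2.1 ⟨hp.2.2, h0⟩
    calc ((univ : Finset (Sym2 (Fin n) → Fin q)).filter
          (fun f => IsIndepSet (Gr n q f) I)).card
        ≤ ((univ : Finset (Sym2 (Fin n) → Fin q)).filter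
          (fun f => ∀ e ∈ K, f e ∈ ({0}ᶜ : Finset (Fin q)))).card := card_le_card hsub
      _ ≤ (∏ _e ∈ K, ({0}ᶜ : Finset (Fin q)).card) *
          (Fintype.card (Fin q)) ^ (Fintype.card (Sym2 (Fin n)) - K.card) :=
          count_constrained K (fun _ => {0}ᶜ)
      _ = (q - 1) ^ K.card * q ^ (E - K.card) := by
          rw [prod_const, card_compl, card_singleton, Fintype.card_fin]
      _ ≤ (q - 1) ^ c2 * q ^ (E - c2) := by
          have h1 : (q - 1) ^ K.card ≤ (q - 1) ^ c2 * q ^ (K.card - c2) := by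
            calc (q - 1) ^ K.card = (q - 1) ^ c2 * (q - 1) ^ (K.card - c2) := by
                  rw [← pow_add]; congr 1; omega
              _ ≤ (q - 1) ^ c2 * q ^ (K.card - c2) :=
                  Nat.mul_le_mul_left _ (Nat.pow_le_pow_left (by omega) _)
          calc (q - 1) ^ K.card * q ^ (E - K.card)
              ≤ (q - 1) ^ c2 * q ^ (K.card - c2) * q ^ (E - K.card) :=
                Nat.mul_le_mul_right _ h1
            _ = (q - 1) ^ c2 * q ^ (E - c2) := by
                rw [mul_assoc, ← pow_add]
                congr 2
                omega
  have hBsub : Bad n q s ⊆ ((univ : Finset (Fin n)).powersetCard s).biUnion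
      (fun I => (univ : Finset (Sym2 (Fin n) → Fin q)).filter
        (fun f => IsIndepSet (Gr n q f) I)) := by
    intro f hf
    rw [Bad, mem_filter] at hf
    obtain ⟨-, I, hI, hind⟩ := hf
    exact mem_biUnion.mpr ⟨I, hI, mem_filter.mpr ⟨mem_univ _, hind⟩⟩
  calc (TFree.Bad n q s).card ≤ ∑ I ∈ (univ : Finset (Fin n)).powersetCard s,
        ((univ : Finset (Sym2 (Fin n) → Fin q)).filter
          (fun f => IsIndepSet (Gr n q f) I)).card :=
        (card_le_card hBsub).trans (card_biUnion_le)
    _ ≤ ∑ _I ∈ (univ : Finset (Fin n)).powersetCard s,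
        ((q - 1) ^ c2 * q ^ (E - c2)) := Finset.sum_le_sum count_I
    _ = Nat.choose n s * ((q - 1) ^ c2 * q ^ (E - c2)) := by
        rw [Finset.sum_const, Finset.card_powersetCard, Finset.card_univ, Fintype.card_fin,
          smul_eq_mul]

end TFree

namespace TFree

variable (n q s : ℕ) [NeZero q]

lemma good_exists (t0 : ℕ) (hq2 : 2 ≤ q)
    (hbad : 2 * (TFree.Bad n q s).card ≤ q ^ (Fintype.card (Sym2 (Fin n))))
    (hnum : 2 * (n ^ 3 * q ^ (Fintype.card (Sym2 (Fin n)) - 3)) <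
      (t0 + 1) * q ^ (Fintype.card (Sym2 (Fin n)))) :
    ∃ f : Sym2 (Fin n) → Fin q, (Tri n q f).card ≤ t0 ∧
      ¬ ∃ I ∈ (univ : Finset (Fin n)).powersetCard s, IsIndepSet (Gr n q f) I := by
  classical
  set E := Fintype.card (Sym2 (Fin n)) with hEdef
  by_contra hcon
  push_neg at hcon
  have hGood : ∀ f ∈ (univ : Finset (Sym2 (Fin n) → Fin q)) \ Bad n q s,
      t0 + 1 ≤ (Tri n q f).card := by
    intro f hf
    rw [mem_sdiff] at hf
    by_contra hlt
    push_neg at hlt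
    obtain ⟨I, hI, hind⟩ := hcon f (by omega)
    exact hf.2 (by rw [Bad, mem_filter]; exact ⟨mem_univ _, I, hI, hind⟩)
  have h1 : ((univ : Finset (Sym2 (Fin n) → Fin q)) \ Bad n q s).card * (t0 + 1) ≤
      ∑ f ∈ (univ : Finset (Sym2 (Fin n) → Fin q)) \ Bad n q s, (Tri n q f).card := by
    have := Finset.card_nsmul_le_sum
      ((univ : Finset (Sym2 (Fin n) → Fin q)) \ Bad n q s) (fun f => (Tri n q f).card)
      (t0 + 1) hGood
    simpa [smul_eq_mul, mul_comm] using this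
  have h2 : ∑ f ∈ (univ : Finset (Sym2 (Fin n) → Fin q)) \ Bad n q s, (Tri n q f).card ≤
      ∑ f : Sym2 (Fin n) → Fin q, (Tri n q f).card :=
    Finset.sum_le_sum_of_subset (sdiff_subset)
  have hΩcard : Fintype.card (Sym2 (Fin n) → Fin q) = q ^ E := by
    rw [Fintype.card_fun, Fintype.card_fin, hEdef]
  have hGcard : ((univ : Finset (Sym2 (Fin n) → Fin q)) \ Bad n q s).card =
      q ^ E - (TFree.Bad n q s).card := by
    rw [card_sdiff_of_subset (subset_univ _), card_univ, hΩcard]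
  have hsum := sum_tri_le n q
  -- numeric contradiction
  have hBle : (TFree.Bad n q s).card ≤ q ^ E := by omega
  have hTB : q ^ E ≤ 2 * (q ^ E - (TFree.Bad n q s).card) := by omega
  have hstep : (t0 + 1) * q ^ E ≤ (t0 + 1) * (2 * (q ^ E - (TFree.Bad n q s).card)) :=
    Nat.mul_le_mul_left _ hTB
  have hstep2 : (t0 + 1) * (2 * (q ^ E - (TFree.Bad n q s).card)) =
      2 * ((q ^ E - (TFree.Bad n q s).card) * (t0 + 1)) := by ring
  rw [hGcard] at h1
  rw [← hEdef] at hsum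
  have hchain := h1.trans (h2.trans hsum)
  have hfinal : (t0 + 1) * q ^ E ≤ 2 * (n ^ 3 * q ^ (E - 3)) := by
    rw [hstep2] at hstep
    refine hstep.trans ?_
    omega
  omega

lemma construction (t0 : ℕ) (f : Sym2 (Fin n) → Fin q) (hTri : (Tri n q f).card ≤ t0)
    (hNoI : ¬ ∃ I ∈ (univ : Finset (Fin n)).powersetCard s, IsIndepSet (Gr n q f) I)
    (hs1 : 1 ≤ s) (ht0n : 2 * t0 ≤ n) (hn1 : 1 ≤ n) :
    ∃ (W₀ : Type) (_ : Fintype W₀), Nonempty W₀ ∧ ∃ H : SimpleGraph W₀, H.CliqueFree 3 ∧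
      (n - t0 ≤ Fintype.card W₀) ∧
      ∀ I : Finset W₀, IsIndepSet H I → I.card ≤ s - 1 := by
  classical
  set D : Finset (Fin n) := (Tri n q f).image (fun t => t.1) with hDdef
  set R : Finset (Fin n) := univ \ D with hRdef
  have hDcard : D.card ≤ t0 := (card_image_le).trans hTri
  have hRcard : n - t0 ≤ R.card := by
    rw [hRdef, card_sdiff_of_subset (subset_univ _), card_univ, Fintype.card_fin]
    omega
  have hRpos : 0 < R.card := by omega
  obtain ⟨x0, hx0⟩ := Finset.card_pos.mp hRpos
  refine ⟨{x : Fin n // x ∈ R}, inferInstance, ⟨⟨x0, hx0⟩⟩,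
    SimpleGraph.comap (fun x => (x : Fin n)) (Gr n q f), ?_, ?_, ?_⟩
  · -- clique-free
    intro t ht
    obtain ⟨x, y, z, nxy, nxz, nyz, rfl⟩ := Finset.card_eq_three.mp ht.card_eq
    have hmx : x ∈ (↑({x, y, z} : Finset {v : Fin n // v ∈ R}) : Set {v : Fin n // v ∈ R}) := by
      simp
    have hmy : y ∈ (↑({x, y, z} : Finset {v : Fin n // v ∈ R}) : Set {v : Fin n // v ∈ R}) := by
      simp
    have hmz : z ∈ (↑({x, y, z} : Finset {v : Fin n // v ∈ R}) : Set {v : Fin n // v ∈ R}) := by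
      simp
    have hadjxy : (Gr n q f).Adj x.1 y.1 := ht.isClique hmx hmy nxy
    have hadjxz : (Gr n q f).Adj x.1 z.1 := ht.isClique hmx hmz nxz
    have hadjyz : (Gr n q f).Adj y.1 z.1 := ht.isClique hmy hmz nyz
    have nvxy : x.1 ≠ y.1 := hadjxy.ne
    have nvxz : x.1 ≠ z.1 := hadjxz.ne
    have nvyz : y.1 ≠ z.1 := hadjyz.ne
    obtain ⟨a, b, c, hab, hbc, rab, rbc, rac, hmem⟩ :=
      sort3 (r := (Gr n q f).Adj) (fun u v h => (Gr n q f).adj_symm h) nvxy nvyz nvxz hadjxy hadjyz hadjxz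
    have htri : (a, b, c) ∈ Tri n q f := by
      rw [Tri, mem_filter]
      exact ⟨mem_univ _, hab, hbc, rab, rbc, rac⟩
    have haD : a ∈ D := mem_image.mpr ⟨(a, b, c), htri, rfl⟩
    have haR : a ∈ R := by
      rcases hmem with rfl | rfl | rfl
      · exact x.2
      · exact y.2
      · exact z.2
    rw [hRdef, mem_sdiff] at haR
    exact haR.2 haD
  · -- size
    rw [Fintype.card_coe]
    exact hRcard
  · -- independence number
    intro I hI
    by_contra hbig
    push_neg at hbig
    have hsI : s ≤ I.card := by omega
    set J : Finset (Fin n) := I.image Subtype.val with hJdef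
    have hJcard : J.card = I.card := card_image_of_injective _ Subtype.val_injective
    have hJindep : IsIndepSet (Gr n q f) J := by
      intro u hu v hv huv
      rw [hJdef, mem_image] at hu hv
      obtain ⟨u', hu', rfl⟩ := hu
      obtain ⟨v', hv', rfl⟩ := hv
      exact hI u' hu' v' hv' huv
    obtain ⟨J', hJ'sub, hJ'card⟩ := Finset.exists_subset_card_eq (show s ≤ J.card by omega)
    exact hNoI ⟨J', Finset.mem_powersetCard.mpr ⟨subset_univ _, hJ'card⟩, hJindep.subset hJ'sub⟩

end TFree


theorem exists_triangleFree_small_ratio (m : ℕ) (hm : 1 ≤ m) :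
    ∃ (W₀ : Type) (_ : Fintype W₀), Nonempty W₀ ∧ ∃ H : SimpleGraph W₀, H.CliqueFree 3 ∧
      ∀ I : Finset W₀, IsIndepSet H I → I.card * m ≤ Fintype.card W₀ := by
  classical
  obtain ⟨L, hLdef⟩ : ∃ L, L = 10 * (m + 1) := ⟨_, rfl⟩
  obtain ⟨n, hndef⟩ : ∃ n, n = 2 ^ (3 * L) := ⟨_, rfl⟩
  obtain ⟨q, hqdef⟩ : ∃ q, q = 2 ^ (2 * L + 1) := ⟨_, rfl⟩
  obtain ⟨s, hsdef⟩ : ∃ s, s = 2 * q * (3 * L + 2) + 1 := ⟨_, rfl⟩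
  obtain ⟨t0, ht0def⟩ : ∃ t0, t0 = 2 ^ (3 * L - 1) := ⟨_, rfl⟩
  obtain ⟨j, hjdef⟩ : ∃ j, j = 3 * L * s + 1 := ⟨_, rfl⟩
  obtain ⟨c2, hc2def⟩ : ∃ c2, c2 = q * j := ⟨_, rfl⟩
  have hL : 20 ≤ L := by omega
  have hmL : m ≤ L := by omega
  have pow_mono : ∀ a b : ℕ, a ≤ b → (2:ℕ) ^ a ≤ 2 ^ b :=
    fun a b h => Nat.pow_le_pow_right (by norm_num) h
  have hq2 : 2 ≤ q := by
    rw [hqdef]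
    calc (2:ℕ) = 2 ^ 1 := rfl
      _ ≤ 2 ^ (2 * L + 1) := pow_mono _ _ (by omega)
  have hs1 : 1 ≤ s := by omega
  have hqpos : 0 < q := by omega
  haveI : NeZero q := ⟨by omega⟩
  have hn2t0 : n = 2 * t0 := by
    rw [hndef, ht0def, ← pow_succ']
    congr 1
    omega
  have hn1 : 1 ≤ n := by
    rw [hndef]; exact Nat.one_le_two_pow
  have hL4 : L ≤ 2 ^ (L - 4) := by
    have h16 := lin_le_two_pow (show 7 ≤ L by omega)
    have heq : (2:ℕ) ^ L = 16 * 2 ^ (L - 4) := by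
      rw [show (16:ℕ) = 2 ^ 4 from rfl, ← pow_add]
      congr 1
      omega
    rw [heq] at h16
    exact Nat.le_of_mul_le_mul_left h16 (by norm_num)
  have hLsq : L ^ 2 ≤ 2 ^ (L - 5) := by
    have h := sq_le_two_pow (show 8 ≤ L - 5 by omega)
    rwa [show L - 5 + 5 = L from by omega] at h
  have hsn : s ≤ n := by
    have h1 : s ≤ 2 ^ (2 * L + 2) * (3 * L + 3) := by
      have h2 : 2 * q = 2 ^ (2 * L + 2) := by rw [hqdef, ← pow_succ']
      have hq1 : 1 ≤ q := by omega
      calc s = 2 * q * (3 * L + 2) + 1 := hsdef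
        _ ≤ 2 * q * (3 * L + 2) + 2 * q := by omega
        _ = 2 * q * (3 * L + 3) := by ring
        _ = 2 ^ (2 * L + 2) * (3 * L + 3) := by rw [h2]
    have h2 : (2:ℕ) ^ (2 * L + 2) * (3 * L + 3) ≤ 2 ^ (2 * L + 2) * (4 * L) :=
      Nat.mul_le_mul_left _ (by omega)
    have h3 : (2:ℕ) ^ (2 * L + 2) * (4 * L) = 2 ^ (2 * L + 4) * L := by
      rw [show (4:ℕ) * L = 2 ^ 2 * L from by norm_num, ← mul_assoc, ← pow_add]
    have h4 : (2:ℕ) ^ (2 * L + 4) * L ≤ 2 ^ (2 * L + 4) * 2 ^ (L - 4) :=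
      Nat.mul_le_mul_left _ hL4
    have h5 : (2:ℕ) ^ (2 * L + 4) * 2 ^ (L - 4) = 2 ^ (3 * L) := by
      rw [← pow_add]; congr 1; omega
    rw [hndef]; omega
  -- the exponent bound c2 ≤ s.choose 2
  have hc2choose : c2 ≤ Nat.choose s 2 := by
    have hch : Nat.choose s 2 = s * (q * (3 * L + 2)) := by
      rw [Nat.choose_two_right]
      have h1 : s - 1 = 2 * (q * (3 * L + 2)) := by rw [hsdef, Nat.add_sub_cancel, mul_assoc]
      rw [h1]
      have h2 : s * (2 * (q * (3 * L + 2))) = s * (q * (3 * L + 2)) * 2 := by ring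
      rw [h2, Nat.mul_div_cancel _ (by norm_num)]
    rw [hch, hc2def, hjdef]
    have hexp : s * (q * (3 * L + 2)) = q * (3 * L * s + 2 * s) := by ring
    rw [hexp]
    exact Nat.mul_le_mul_left _ (by omega)
  -- E lower bound
  obtain ⟨E, hEdef⟩ : ∃ E, E = Fintype.card (Sym2 (Fin n)) := ⟨_, rfl⟩
  have hEval : E = (n + 1) * n / 2 := by
    rw [hEdef, Sym2.card, Fintype.card_fin, Nat.choose_two_right]
    have h : n + 1 - 1 = n := by omega
    rw [h]
  have hElb : 2 ^ (6 * L - 1) ≤ E := by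
    have h1 : n * n = 2 * 2 ^ (6 * L - 1) := by
      rw [hndef, ← pow_add, ← pow_succ']
      congr 1
      omega
    have h2 : n * n / 2 ≤ (n + 1) * n / 2 := Nat.div_le_div_right (by nlinarith)
    rw [hEval]
    have h3 : n * n / 2 = 2 ^ (6 * L - 1) := by omega
    omega
  have hE3 : 3 ≤ E := by
    have : (8:ℕ) ≤ 2 ^ (6 * L - 1) :=
      le_trans (by norm_num) (pow_mono 3 (6 * L - 1) (by omega))
    omega
  have hc2E : c2 ≤ E := by
    have h1 : j ≤ 4 * L * s := by
      rw [hjdef]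
      have : 1 ≤ L * s := Nat.one_le_iff_ne_zero.mpr (by positivity)
      nlinarith
    have h2 : 4 * L * s ≤ 4 * 2 ^ (L - 4) * 2 ^ (3 * L) := by
      have := Nat.mul_le_mul (Nat.mul_le_mul (le_refl 4) hL4) (hndef ▸ hsn)
      exact this
    have h3 : (4:ℕ) * 2 ^ (L - 4) * 2 ^ (3 * L) = 2 ^ (4 * L - 2) := by
      rw [show (4:ℕ) = 2 ^ 2 from rfl, ← pow_add, ← pow_add]
      congr 1
      omega
    have h4 : c2 ≤ 2 ^ (2 * L + 1) * 2 ^ (4 * L - 2) := by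
      rw [hc2def, hqdef]
      exact Nat.mul_le_mul_left _ (by omega)
    have h5 : (2:ℕ) ^ (2 * L + 1) * 2 ^ (4 * L - 2) = 2 ^ (6 * L - 1) := by
      rw [← pow_add]
      congr 1
      omega
    omega
  -- the Bad bound
  have hbadnum : 2 * ((TFree.Bad n q s).card) ≤ q ^ E := by
    have hb := TFree.bad_le n q s c2 hq2 hc2choose
    rw [← hEdef] at hb
    have hchoose : Nat.choose n s ≤ 2 ^ (3 * L * s) := by
      calc Nat.choose n s ≤ n ^ s := Nat.choose_le_pow n s
        _ = 2 ^ (3 * L * s) := by rw [hndef, ← pow_mul]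
    have hkey : ∀ i : ℕ, 2 ^ i * (q - 1) ^ (q * i) ≤ q ^ (q * i) := by
      intro i
      calc 2 ^ i * (q - 1) ^ (q * i) = (2 * (q - 1) ^ q) ^ i := by
            rw [mul_pow, ← pow_mul]
        _ ≤ (q ^ q) ^ i := Nat.pow_le_pow_left (two_mul_pred_pow_le q hq2) i
        _ = q ^ (q * i) := by rw [← pow_mul]
    calc 2 * (TFree.Bad n q s).card
        ≤ 2 * (Nat.choose n s * ((q - 1) ^ c2 * q ^ (E - c2))) := by omega
      _ ≤ 2 * (2 ^ (3 * L * s) * ((q - 1) ^ c2 * q ^ (E - c2))) := by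
          have := Nat.mul_le_mul_right ((q - 1) ^ c2 * q ^ (E - c2)) hchoose
          omega
      _ = (2 ^ j * (q - 1) ^ (q * j)) * q ^ (E - c2) := by
          have e1 : (2:ℕ) ^ j = 2 ^ (3 * L * s) * 2 := by rw [hjdef, pow_succ]
          rw [e1, ← hc2def]
          ring
      _ ≤ q ^ (q * j) * q ^ (E - c2) := Nat.mul_le_mul_right _ (hkey j)
      _ = q ^ E := by
          rw [← pow_add]
          congr 1
          rw [hc2def] at hc2E ⊢
          omega
  -- the triangle-count numeric bound
  have htrinum : 2 * (n ^ 3 * q ^ (E - 3)) < (t0 + 1) * q ^ E := by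
    have h1 : 2 * n ^ 3 = 2 ^ (9 * L + 1) := by
      rw [hndef, ← pow_mul, ← pow_succ']
      congr 1
      omega
    have h2 : (2:ℕ) ^ (9 * L + 1) < 2 ^ (9 * L + 2) := by
      exact Nat.pow_lt_pow_right (by norm_num) (by omega)
    have h3 : (2:ℕ) ^ (9 * L + 2) = t0 * q ^ 3 := by
      rw [ht0def, hqdef, ← pow_mul, ← pow_add]
      congr 1
      omega
    have h4 : q ^ 3 * q ^ (E - 3) = q ^ E := by
      rw [← pow_add]
      congr 1
      omega
    have hqE3pos : 0 < q ^ (E - 3) := pow_pos hqpos _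
    calc 2 * (n ^ 3 * q ^ (E - 3)) = (2 * n ^ 3) * q ^ (E - 3) := by ring
      _ < 2 ^ (9 * L + 2) * q ^ (E - 3) := by
          rw [h1]
          exact (Nat.mul_lt_mul_right hqE3pos).mpr h2
      _ = t0 * (q ^ 3 * q ^ (E - 3)) := by rw [h3]; ring
      _ = t0 * q ^ E := by rw [h4]
      _ ≤ (t0 + 1) * q ^ E := Nat.mul_le_mul_right _ (by omega)
  -- get a good labelling
  have hgood := TFree.good_exists n q s t0 hq2 (hEdef ▸ hbadnum) (hEdef ▸ htrinum)
  obtain ⟨f, hTri, hNoI⟩ := hgood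
  have ht0n : 2 * t0 ≤ n := by omega
  obtain ⟨W₀, instW₀, hne, H, hfree, hcard, hindep⟩ :=
    TFree.construction n q s t0 f hTri hNoI hs1 ht0n hn1
  refine ⟨W₀, instW₀, hne, H, hfree, ?_⟩
  intro I hI
  have h1 : I.card ≤ s - 1 := hindep I hI
  have h2 : (s - 1) * m ≤ t0 := by
    have he1 : s - 1 = 2 ^ (2 * L + 2) * (3 * L + 2) := by
      rw [hsdef, hqdef, Nat.add_sub_cancel, ← pow_succ']
    have he2 : (3 * L + 2) * m ≤ 4 * L * L := by
      have : 3 * L + 2 ≤ 4 * L := by omega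
      exact Nat.mul_le_mul this hmL
    have he3 : 4 * L * L ≤ 2 ^ (L - 3) := by
      have : (4:ℕ) * L * L = 4 * L ^ 2 := by ring
      rw [this]
      calc (4:ℕ) * L ^ 2 ≤ 4 * 2 ^ (L - 5) := Nat.mul_le_mul_left _ hLsq
        _ = 2 ^ (L - 3) := by
            rw [show (4:ℕ) = 2 ^ 2 from rfl, ← pow_add]
            congr 1
            omega
    calc (s - 1) * m = 2 ^ (2 * L + 2) * ((3 * L + 2) * m) := by rw [he1]; ring
      _ ≤ 2 ^ (2 * L + 2) * 2 ^ (L - 3) := by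
          have := he2.trans he3
          exact Nat.mul_le_mul_left _ this
      _ = 2 ^ (3 * L - 1) := by
          rw [← pow_add]
          congr 1
          omega
      _ = t0 := ht0def.symm
  calc I.card * m ≤ (s - 1) * m := Nat.mul_le_mul_right _ h1
    _ ≤ t0 := h2
    _ ≤ n - t0 := by omega
    _ ≤ Fintype.card W₀ := hcard

section Chain

variable {W : Type} [Fintype W] [DecidableEq W]

lemma indepNum_erase_le (Hbig : SimpleGraph W) (E : Finset (Sym2 W)) (e : Sym2 W) :
    indepNum W (SimpleGraph.fromEdgeSet ↑(E.erase e)) ≤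
      indepNum W (SimpleGraph.fromEdgeSet ↑E) + 1 := by
  classical
  induction e using Sym2.ind with
  | _ u v =>
    obtain ⟨I, hI, hIcard⟩ := exists_indep_card (SimpleGraph.fromEdgeSet
      (↑(E.erase s(u, v)) : Set (Sym2 W)))
    have hIndep : IsIndepSet (SimpleGraph.fromEdgeSet (↑E : Set (Sym2 W))) (I.erase u) := by
      intro x hx y hy hadj
      rw [SimpleGraph.fromEdgeSet_adj] at hadj
      obtain ⟨hmem, hne⟩ := hadj
      rw [Finset.mem_coe] at hmem
      by_cases hxy : s(x, y) = s(u, v)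
      · rw [Sym2.eq_iff] at hxy
        rcases hxy with ⟨rfl, rfl⟩ | ⟨rfl, rfl⟩
        · exact (Finset.mem_erase.mp hx).1 rfl
        · exact (Finset.mem_erase.mp hy).1 rfl
      · have hmem' : s(x, y) ∈ E.erase s(u, v) := Finset.mem_erase.mpr ⟨hxy, hmem⟩
        have : (SimpleGraph.fromEdgeSet (↑(E.erase s(u, v)) : Set (Sym2 W))).Adj x y := by
          rw [SimpleGraph.fromEdgeSet_adj]
          exact ⟨Finset.mem_coe.mpr hmem', hne⟩
        exact hI x (Finset.mem_of_mem_erase hx) y (Finset.mem_of_mem_erase hy) this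
    have h1 : (I.erase u).card ≤ indepNum W (SimpleGraph.fromEdgeSet (↑E : Set (Sym2 W))) :=
      le_indepNum _ hIndep
    have h2 : I.card ≤ (I.erase u).card + 1 := by
      by_cases hu : u ∈ I
      · rw [Finset.card_erase_of_mem hu]
        omega
      · rw [Finset.erase_eq_of_notMem hu]
        omega
    omega

lemma chain_exists (Hbig : SimpleGraph W) (hfree : Hbig.CliqueFree 3) (a : ℕ)
    (ha_top : a ≤ Fintype.card W) (ha_bot : ∀ I, IsIndepSet Hbig I → I.card ≤ a) :
    ∃ Ghat : SimpleGraph W, Ghat.CliqueFree 3 ∧ indepNum W Ghat = a := by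
  classical
  have main : ∀ (c : ℕ) (E : Finset (Sym2 W)), E.card = c →
      (∀ e ∈ E, e ∈ Hbig.edgeSet) →
      indepNum W (SimpleGraph.fromEdgeSet ↑E) ≤ a →
      ∃ Ghat : SimpleGraph W, Ghat.CliqueFree 3 ∧ indepNum W Ghat = a := by
    intro c
    induction c using Nat.strong_induction_on with
    | _ c ih =>
      intro E hcard hsub hle
      have hle_big : SimpleGraph.fromEdgeSet (↑E : Set (Sym2 W)) ≤ Hbig := by
        intro x y hadj
        rw [SimpleGraph.fromEdgeSet_adj] at hadj
        exact (SimpleGraph.mem_edgeSet Hbig).mp (hsub _ (Finset.mem_coe.mp hadj.1))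
      rcases eq_or_lt_of_le hle with heq | hlt
      · exact ⟨_, hfree.anti hle_big, heq⟩
      · rcases Finset.eq_empty_or_nonempty E with rfl | ⟨e, he⟩
        · exfalso
          have huniv : IsIndepSet (SimpleGraph.fromEdgeSet
              (↑(∅ : Finset (Sym2 W)) : Set (Sym2 W))) Finset.univ := by
            intro x _ y _ hadj
            rw [SimpleGraph.fromEdgeSet_adj] at hadj
            simpa using hadj.1
          have := le_indepNum _ huniv
          rw [Finset.card_univ] at this
          omega
        · have hc' : (E.erase e).card < c := by
            rw [← hcard]
            exact Finset.card_erase_lt_of_mem he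
          refine ih _ hc' (E.erase e) rfl
            (fun e' he' => hsub e' (Finset.mem_of_mem_erase he')) ?_
          have := indepNum_erase_le Hbig E e
          omega
  have hsubtop : ∀ e ∈ (univ : Finset (Sym2 W)).filter (· ∈ Hbig.edgeSet),
      e ∈ Hbig.edgeSet := fun e he => (Finset.mem_filter.mp he).2
  refine main _ ((univ : Finset (Sym2 W)).filter (· ∈ Hbig.edgeSet)) rfl hsubtop ?_
  apply indepNum_le
  intro I hI
  apply ha_bot
  intro x hx y hy hadj
  refine hI x hx y hy ?_
  rw [SimpleGraph.fromEdgeSet_adj]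
  refine ⟨Finset.mem_coe.mpr (Finset.mem_filter.mpr ⟨mem_univ _, ?_⟩), hadj.ne⟩
  exact (SimpleGraph.mem_edgeSet Hbig).mpr hadj

end Chain

/-- For every `ε > 0` and every finite simple graph `G` on a nonempty vertex set, there is a
finite triangle-free simple graph `Ĝ` on a nonempty vertex set with
`rel-IS(G) ≤ rel-IS(Ĝ) ≤ (1 + ε)·rel-IS(G)`. -/
theorem exists_triangleFree_relIS_approx (ε : ℝ) (hε : 0 < ε)
    (V : Type) [Fintype V] [Nonempty V] (G : SimpleGraph V) :
    ∃ (W : Type) (instW : Fintype W) (_ : Nonempty W) (Ghat : SimpleGraph W),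
      Ghat.CliqueFree 3 ∧
      relIS V G ≤ @relIS W instW Ghat ∧
      @relIS W instW Ghat ≤ (1 + ε) * relIS V G := by
  classical
  obtain ⟨n, hndef⟩ : ∃ n, n = Fintype.card V := ⟨_, rfl⟩
  have hn1 : 1 ≤ n := hndef ▸ Fintype.card_pos
  obtain ⟨k, hkdef⟩ : ∃ k, k = indepNum V G := ⟨_, rfl⟩
  have hk1 : 1 ≤ k := by
    obtain ⟨v⟩ := (inferInstance : Nonempty V)
    have hsingle : IsIndepSet G {v} := by
      intro x hx y hy hadj
      rw [Finset.mem_singleton] at hx hy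
      subst hx; subst hy
      exact G.irrefl hadj
    have := le_indepNum G hsingle
    rw [Finset.card_singleton] at this
    omega
  have hkn : k ≤ n := by
    rw [hkdef, hndef]
    exact indepNum_le G (fun I _ => Finset.card_le_univ I)
  obtain ⟨W₀, instW₀, hne₀, H, hHfree, hHindep⟩ := exists_triangleFree_small_ratio n hn1
  obtain ⟨N, hNdef⟩ : ∃ N, N = Fintype.card W₀ := ⟨_, rfl⟩
  have hN1 : 1 ≤ N := hNdef ▸ @Fintype.card_pos W₀ _ hne₀
  -- the disjoint copies graph (via comap of snd, which is even bigger)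
  have hneW' : Nonempty (Fin n × W₀) := ⟨(⟨0, by omega⟩, Classical.arbitrary W₀)⟩
  set H' : SimpleGraph (Fin n × W₀) := SimpleGraph.comap Prod.snd H with hH'def
  have hH'free : H'.CliqueFree 3 := by
    intro t ht
    obtain ⟨x, y, z, nxy, nxz, nyz, rfl⟩ := Finset.card_eq_three.mp ht.card_eq
    have hmx : x ∈ (↑({x, y, z} : Finset (Fin n × W₀)) : Set (Fin n × W₀)) := by simp
    have hmy : y ∈ (↑({x, y, z} : Finset (Fin n × W₀)) : Set (Fin n × W₀)) := by simp
    have hmz : z ∈ (↑({x, y, z} : Finset (Fin n × W₀)) : Set (Fin n × W₀)) := by simp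
    have haxy : H.Adj x.2 y.2 := ht.isClique hmx hmy nxy
    have haxz : H.Adj x.2 z.2 := ht.isClique hmx hmz nxz
    have hayz : H.Adj y.2 z.2 := ht.isClique hmy hmz nyz
    exact hHfree {x.2, y.2, z.2}
      (SimpleGraph.is3Clique_triple_iff.mpr ⟨haxy, haxz, hayz⟩)
  have hH'indep : ∀ I : Finset (Fin n × W₀), IsIndepSet H' I → I.card ≤ N := by
    intro I hI
    set J : Finset W₀ := I.image Prod.snd with hJdef
    have hJindep : IsIndepSet H J := by
      intro u hu v hv hadj
      rw [hJdef, Finset.mem_image] at hu hv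
      obtain ⟨p, hp, rfl⟩ := hu
      obtain ⟨r, hr, rfl⟩ := hv
      exact hI p hp r hr hadj
    have hJcard : J.card * n ≤ N := hNdef ▸ hHindep J hJindep
    have hfib : I.card ≤ n * J.card := by
      apply Finset.card_le_mul_card_image
      intro b _
      have hinj : Set.InjOn Prod.fst (↑(I.filter (fun p => p.2 = b)) : Set (Fin n × W₀)) := by
        intro p hp r hr hfst
        rw [Finset.mem_coe, Finset.mem_filter] at hp hr
        exact Prod.ext hfst (hp.2.trans hr.2.symm)
      calc (I.filter (fun p => p.2 = b)).card
          = ((I.filter (fun p => p.2 = b)).image Prod.fst).card :=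
            (Finset.card_image_of_injOn hinj).symm
        _ ≤ Fintype.card (Fin n) := Finset.card_le_univ _
        _ = n := Fintype.card_fin n
    calc I.card ≤ n * J.card := hfib
      _ = J.card * n := Nat.mul_comm _ _
      _ ≤ N := hJcard
  -- apply the chain lemma with target k * N
  have hcardW' : Fintype.card (Fin n × W₀) = n * N := by
    rw [Fintype.card_prod, Fintype.card_fin, hNdef]
  have ha_top : k * N ≤ Fintype.card (Fin n × W₀) := by
    rw [hcardW']
    exact Nat.mul_le_mul_right _ hkn
  have ha_bot : ∀ I : Finset (Fin n × W₀), IsIndepSet H' I → I.card ≤ k * N := by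
    intro I hI
    calc I.card ≤ N := hH'indep I hI
      _ ≤ k * N := Nat.le_mul_of_pos_left _ (by omega)
  obtain ⟨Ghat, hGhatfree, hGhatnum⟩ := chain_exists H' hH'free (k * N) ha_top ha_bot
  refine ⟨Fin n × W₀, inferInstance, hneW', Ghat, hGhatfree, ?_, ?_⟩
  · -- relIS V G ≤ relIS (Fin n × W₀) Ghat  (in fact equal)
    have heq : relIS (Fin n × W₀) Ghat = relIS V G := by
      rw [relIS, relIS, hGhatnum, hcardW', ← hkdef, ← hndef]
      have hNne : (N:ℝ) ≠ 0 := by positivity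
      have hnne : (n:ℝ) ≠ 0 := by positivity
      push_cast
      field_simp
    rw [heq]
  · have heq : relIS (Fin n × W₀) Ghat = relIS V G := by
      rw [relIS, relIS, hGhatnum, hcardW', ← hkdef, ← hndef]
      have hNne : (N:ℝ) ≠ 0 := by positivity
      have hnne : (n:ℝ) ≠ 0 := by positivity
      push_cast
      field_simp
    rw [heq]
    have hpos : 0 ≤ relIS V G := by
      rw [relIS]
      positivity
    nlinarith
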